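/- Let F ∈ F_q[X] be irreducible of degree r, and let S be a set of K monic irreducible polynomials of degree less than r. For each nonzero residue s modulo F let w(s) be the number of unordered pairs {u,v} ⊆ S with u ≠ v and uv ≡ s (mod F). Then w(s) ≤ K/2 for every s, and Σ_s w(s) = K(K-1)/2, where the sum is over all nonzero residues s. -/

import Mathlib

open Polynomial Finset

private lemma stmt18_aux {Fq : Type*} [Field Fq] (F a : Polynomial Fq)
    (h : F ∣ a) (hd : a.natDegree < F.natDegree) : a = 0 :=
  Polynomial.eq_zero_of_dvd_of_natDegree_lt h hd

/-- Let `F ∈ F_q[X]` be irreducible of degree `r` and `S` a set of `K` monic irreducible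
polynomials of degree less than `r`. For a nonzero residue `s` let `w(s)` be the number of
unordered pairs `{u,v} ⊆ S`, `u ≠ v`, with `uv ≡ s (mod F)`. Then `w(s) ≤ K/2` for all `s`,
and `Σ_s w(s) = K(K-1)/2` over all nonzero residues `s`. -/
theorem stmt_18 (q r : ℕ)
    (Fq : Type*) [Field Fq] [Fintype Fq] (hq : Fintype.card Fq = q)
    (F : Polynomial Fq) (hF : Irreducible F) (hdeg : F.natDegree = r)
    (S : Finset (Polynomial Fq))
    (hS : ∀ u ∈ S, u.Monic ∧ Irreducible u ∧ u.natDegree < r)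
    (K : ℕ) (hK : S.card = K)
    (w : Polynomial Fq → ℕ)
    (hw : ∀ s, w s = {t : Finset (Polynomial Fq) | ↑t ⊆ (S : Set (Polynomial Fq)) ∧
      t.card = 2 ∧ ∃ u ∈ t, ∃ v ∈ t, u ≠ v ∧ F ∣ u * v - s}.ncard) :
    (∀ s : Polynomial Fq, 2 * w s ≤ K)
    ∧ (∑ᶠ s ∈ {s : Polynomial Fq | s ≠ 0 ∧ s.natDegree < r}, w s) = K * (K - 1) / 2 := by
  classical
  subst hdeg hK
  have hFprime : Prime F := hF.prime
  have hF0 : F ≠ 0 := hFprime.ne_zero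
  set r := F.natDegree with hr
  -- F does not divide any element of S
  have hndvd : ∀ u ∈ S, ¬ F ∣ u := by
    intro u hu hdvd
    obtain ⟨hm, hi, hd⟩ := hS u hu
    exact hi.ne_zero (stmt18_aux F u hdvd hd)
  set T := S.powersetCard 2 with hT
  -- for t in T and x ∈ t, t = {x, y} with product x*y
  have hpair : ∀ t ∈ T, ∀ x ∈ t, ∃ y, y ≠ x ∧ y ∈ t ∧ (∏ z ∈ t, z) = x * y := by
    intro t ht x hx
    obtain ⟨htS, htc⟩ := Finset.mem_powersetCard.mp ht
    obtain ⟨a, b, hab, rfl⟩ := Finset.card_eq_two.mp htc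
    rcases Finset.mem_insert.mp hx with rfl | hx'
    · exact ⟨b, hab.symm, by simp, Finset.prod_pair hab⟩
    · rw [Finset.mem_singleton] at hx'
      subst hx'
      exact ⟨a, hab, by simp, by rw [Finset.prod_pair hab]; ring⟩
  -- condition as divisibility of the product
  have hfwd : ∀ (s : Polynomial Fq), ∀ t ∈ T,
      (∃ u ∈ t, ∃ v ∈ t, u ≠ v ∧ F ∣ u * v - s) → F ∣ (∏ z ∈ t, z) - s := by
    intro s t ht ⟨u, hu, v, hv, huv, hdvd⟩
    obtain ⟨htS, htc⟩ := Finset.mem_powersetCard.mp ht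
    have e : t = {u, v} := by
      apply (Finset.eq_of_subset_of_card_le _ _).symm
      · intro z hz
        simp only [Finset.mem_insert, Finset.mem_singleton] at hz
        rcases hz with rfl | rfl; exacts [hu, hv]
      · rw [htc, Finset.card_pair huv]
    rw [e, Finset.prod_pair huv]
    exact hdvd
  -- w s as a filter cardinality
  have hw' : ∀ s, w s =
      (T.filter (fun t => ∃ u ∈ t, ∃ v ∈ t, u ≠ v ∧ F ∣ u * v - s)).card := by
    intro s
    rw [hw]
    have : {t : Finset (Polynomial Fq) | ↑t ⊆ (S : Set (Polynomial Fq)) ∧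
        t.card = 2 ∧ ∃ u ∈ t, ∃ v ∈ t, u ≠ v ∧ F ∣ u * v - s} =
        ↑(T.filter (fun t => ∃ u ∈ t, ∃ v ∈ t, u ≠ v ∧ F ∣ u * v - s)) := by
      ext t
      simp [hT, Finset.mem_powersetCard, and_assoc]
    rw [this, Set.ncard_coe_finset]
  constructor
  · -- first part: 2 * w s ≤ K
    intro s
    rw [hw']
    set Fil := T.filter (fun t => ∃ u ∈ t, ∃ v ∈ t, u ≠ v ∧ F ∣ u * v - s) with hFil
    have hdisj : ∀ t1 ∈ Fil, ∀ t2 ∈ Fil, t1 ≠ t2 → Disjoint t1 t2 := by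
      intro t1 ht1 t2 ht2 hne
      rw [Finset.disjoint_left]
      intro x hx1 hx2
      obtain ⟨ht1T, hc1⟩ := Finset.mem_filter.mp ht1
      obtain ⟨ht2T, hc2⟩ := Finset.mem_filter.mp ht2
      obtain ⟨y1, hy1, hy1t, hp1⟩ := hpair t1 ht1T x hx1
      obtain ⟨y2, hy2, hy2t, hp2⟩ := hpair t2 ht2T x hx2
      have hd1 : F ∣ x * y1 - s := hp1 ▸ hfwd s t1 ht1T hc1
      have hd2 : F ∣ x * y2 - s := hp2 ▸ hfwd s t2 ht2T hc2
      have hdd : F ∣ x * (y1 - y2) := by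
        have : x * (y1 - y2) = (x * y1 - s) - (x * y2 - s) := by ring
        rw [this]; exact dvd_sub hd1 hd2
      have hxS : x ∈ S := (Finset.mem_powersetCard.mp ht1T).1 hx1
      have hy1S : y1 ∈ S := (Finset.mem_powersetCard.mp ht1T).1 hy1t
      have hy2S : y2 ∈ S := (Finset.mem_powersetCard.mp ht2T).1 hy2t
      have hdy : F ∣ y1 - y2 := (hFprime.dvd_mul.mp hdd).resolve_left (hndvd x hxS)
      have : y1 - y2 = 0 := by
        apply stmt18_aux F _ hdy
        calc (y1 - y2).natDegree ≤ max y1.natDegree y2.natDegree := natDegree_sub_le _ _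
          _ < r := max_lt (hS y1 hy1S).2.2 (hS y2 hy2S).2.2
      have hyy : y1 = y2 := sub_eq_zero.mp this
      apply hne
      have e1 : t1 = {x, y1} := by
        apply (Finset.eq_of_subset_of_card_le _ _).symm
        · intro z hz
          simp only [Finset.mem_insert, Finset.mem_singleton] at hz
          rcases hz with rfl | rfl; exacts [hx1, hy1t]
        · rw [(Finset.mem_powersetCard.mp ht1T).2, Finset.card_pair (fun h => hy1 h.symm)]
      have e2 : t2 = {x, y2} := by
        apply (Finset.eq_of_subset_of_card_le _ _).symm
        · intro z hz
          simp only [Finset.mem_insert, Finset.mem_singleton] at hz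
          rcases hz with rfl | rfl; exacts [hx2, hy2t]
        · rw [(Finset.mem_powersetCard.mp ht2T).2, Finset.card_pair (fun h => hy2 h.symm)]
      rw [e1, e2, hyy]
    have hsum : 2 * Fil.card = ∑ t ∈ Fil, t.card := by
      rw [Finset.sum_congr rfl (fun t ht =>
        (Finset.mem_powersetCard.mp (Finset.mem_filter.mp ht).1).2)]
      simp [mul_comm]
      rfl
    rw [hsum, ← Finset.card_biUnion hdisj]
    apply Finset.card_le_card
    intro z hz
    obtain ⟨t, ht, hzt⟩ := Finset.mem_biUnion.mp hz
    exact (Finset.mem_powersetCard.mp (Finset.mem_filter.mp ht).1).1 hzt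
  · -- second part
    set Fm := F * C (F.leadingCoeff)⁻¹ with hFm
    have hFmm : Fm.Monic := monic_mul_leadingCoeff_inv hF0
    have hFmdeg : Fm.degree = F.degree := degree_mul_leadingCoeff_inv F hF0
    set f : Finset (Polynomial Fq) → Polynomial Fq := fun t => (∏ z ∈ t, z) %ₘ Fm with hf
    -- F divides p - f t
    have hdvdf : ∀ t, F ∣ (∏ z ∈ t, z) - f t := by
      intro t
      rw [hf]
      simp only
      rw [modByMonic_eq_sub_mul_div _ Fm]
      have : (∏ z ∈ t, z) - ((∏ z ∈ t, z) - Fm * ((∏ z ∈ t, z) /ₘ Fm)) =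
          Fm * ((∏ z ∈ t, z) /ₘ Fm) := by ring
      rw [this, hFm]
      exact Dvd.dvd.mul_right (dvd_mul_right F _) _
    -- F does not divide the product, for t ∈ T
    have hnp : ∀ t ∈ T, ¬ F ∣ (∏ z ∈ t, z) := by
      intro t ht hdvd
      obtain ⟨htS, htc⟩ := Finset.mem_powersetCard.mp ht
      obtain ⟨a, b, hab, rfl⟩ := Finset.card_eq_two.mp htc
      rw [Finset.prod_pair hab] at hdvd
      rcases hFprime.dvd_mul.mp hdvd with h | h
      · exact hndvd a (htS (by simp)) h
      · exact hndvd b (htS (by simp)) h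
    -- f t is a nonzero residue of degree < r
    have hfmem : ∀ t ∈ T, f t ≠ 0 ∧ (f t).natDegree < r := by
      intro t ht
      have hne : f t ≠ 0 := by
        intro h0
        apply hnp t ht
        have := hdvdf t
        rw [h0, sub_zero] at this
        exact this
      refine ⟨hne, ?_⟩
      have hlt : (f t).degree < Fm.degree := degree_modByMonic_lt _ hFmm
      rw [hFmdeg] at hlt
      exact natDegree_lt_natDegree hne hlt
    -- the residue set is finite
    have hAfin : {s : Polynomial Fq | s ≠ 0 ∧ s.natDegree < r}.Finite := by
      apply Set.Finite.of_finite_image (f := fun p => fun i : Fin r => p.coeff i)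
        (Set.toFinite _)
      intro p hp p' hp' he
      apply Polynomial.ext
      intro n
      rcases lt_or_ge n r with hn | hn
      · exact congrFun he ⟨n, hn⟩
      · rw [coeff_eq_zero_of_natDegree_lt (lt_of_lt_of_le hp.2 hn),
          coeff_eq_zero_of_natDegree_lt (lt_of_lt_of_le hp'.2 hn)]
    set A := hAfin.toFinset with hA
    have hmemA : ∀ t ∈ T, f t ∈ A := by
      intro t ht
      rw [hA, Set.Finite.mem_toFinset]
      exact hfmem t ht
    -- for s ∈ A, the filter defining w s coincides with the fiber of f
    have hfib : ∀ s ∈ A, (T.filter (fun t => ∃ u ∈ t, ∃ v ∈ t, u ≠ v ∧ F ∣ u * v - s)) =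
        T.filter (fun t => f t = s) := by
      intro s hsA
      rw [hA, Set.Finite.mem_toFinset] at hsA
      apply Finset.filter_congr
      intro t ht
      constructor
      · intro hc
        have h1 : F ∣ (∏ z ∈ t, z) - s := hfwd s t ht hc
        have h2 : F ∣ (∏ z ∈ t, z) - f t := hdvdf t
        have h3 : F ∣ f t - s := by
          have e : f t - s = ((∏ z ∈ t, z) - s) - ((∏ z ∈ t, z) - f t) := by ring
          rw [e]; exact dvd_sub h1 h2
        have : f t - s = 0 := by
          apply stmt18_aux F _ h3
          calc (f t - s).natDegree ≤ max (f t).natDegree s.natDegree := natDegree_sub_le _ _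
            _ < r := max_lt (hfmem t ht).2 hsA.2
        exact sub_eq_zero.mp this
      · intro hfe
        obtain ⟨htS, htc⟩ := Finset.mem_powersetCard.mp ht
        obtain ⟨a, b, hab, rfl⟩ := Finset.card_eq_two.mp htc
        refine ⟨a, by simp, b, by simp, hab, ?_⟩
        have := hdvdf {a, b}
        rw [hfe, Finset.prod_pair hab] at this
        exact this
    have hcov : (∑ᶠ s ∈ {s : Polynomial Fq | s ≠ 0 ∧ s.natDegree < r}, w s) = ∑ s ∈ A, w s := by
      rw [← Set.Finite.coe_toFinset hAfin, finsum_mem_coe_finset]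
    rw [hcov]
    have : ∑ s ∈ A, w s = ∑ s ∈ A, (T.filter (fun t => f t = s)).card := by
      apply Finset.sum_congr rfl
      intro s hs
      rw [hw' s, hfib s hs]
    rw [this, ← Finset.card_eq_sum_card_fiberwise hmemA, hT, Finset.card_powersetCard,
      Nat.choose_two_right]
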